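/- Let 0 < r₁ < R₁ and 0 < r₂ < R₂ be real numbers with R₁/r₁ = R₂/r₂, and let f : ℂ → ℂ be holomorphic on A₁ = {z ∈ ℂ : r₁ < |z| < R₁} and map A₁ bijectively onto A₂ = {z ∈ ℂ : r₂ < |z| < R₂}. Then there exists λ ∈ ℂ such that either f(z) = λ·z for all z ∈ A₁, in which case |λ| = r₂/r₁, or f(z) = λ/z for all z ∈ A₁, in which case |λ| = r₂·R₁. -/

import Mathlib

open Complex Set Metric Filter Topology

/-- The open annulus `{z ∈ ℂ : r < |z| < R}`. -/
def annulus (r R : ℝ) : Set ℂ := {z : ℂ | r < ‖z‖ ∧ ‖z‖ < R}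

lemma isOpen_annulus (r R : ℝ) : IsOpen (annulus r R) := by
  have : annulus r R = (fun z : ℂ => ‖z‖) ⁻¹' (Set.Ioo r R) := rfl
  rw [this]
  exact (isOpen_Ioo).preimage continuous_norm

lemma mem_annulus_of_real {r R s : ℝ} (h1 : r < s) (h2 : s < R) (hs : 0 ≤ s) :
    (s : ℂ) ∈ annulus r R := by
  constructor <;> simp [Complex.norm_real, Real.norm_eq_abs, _root_.abs_of_nonneg hs, h1, h2]

lemma annulus_nonempty {r R : ℝ} (hr : 0 ≤ r) (h : r < R) : (annulus r R).Nonempty :=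
  ⟨((r + R) / 2 : ℝ), mem_annulus_of_real (by linarith) (by linarith) (by linarith)⟩

lemma isPreconnected_annulus {r R : ℝ} (hr : 0 ≤ r) : IsPreconnected (annulus r R) := by
  have key : annulus r R =
      (fun p : ℝ × ℝ => (p.1 : ℂ) * Complex.exp (p.2 * Complex.I)) ''
        (Set.Ioo r R ×ˢ (Set.univ : Set ℝ)) := by
    ext z
    constructor
    · rintro ⟨h1, h2⟩
      refine ⟨(‖z‖, Complex.arg z), ⟨⟨h1, h2⟩, trivial⟩, ?_⟩
      exact Complex.norm_mul_exp_arg_mul_I z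
    · rintro ⟨⟨s, θ⟩, ⟨⟨hs1, hs2⟩, -⟩, rfl⟩
      have h0 : 0 ≤ s := le_trans hr hs1.le
      have : ‖(s : ℂ) * Complex.exp (θ * Complex.I)‖ = s := by
        rw [norm_mul, Complex.norm_exp_ofReal_mul_I, Complex.norm_real, Real.norm_eq_abs, _root_.abs_of_nonneg h0, mul_one]
      exact ⟨by rw [this] at *; exact hs1, by rw [this]; exact hs2⟩
  rw [key]
  apply IsPreconnected.image (isPreconnected_Ioo.prod isPreconnected_univ)
  fun_prop

lemma isCompact_closed_annulus {a b : ℝ} :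
    IsCompact {z : ℂ | a ≤ ‖z‖ ∧ ‖z‖ ≤ b} := by
  have hc : IsClosed {z : ℂ | a ≤ ‖z‖ ∧ ‖z‖ ≤ b} := by
    have : {z : ℂ | a ≤ ‖z‖ ∧ ‖z‖ ≤ b} = (fun z : ℂ => ‖z‖) ⁻¹' (Set.Icc a b) := rfl
    rw [this]; exact isClosed_Icc.preimage continuous_norm
  apply Metric.isCompact_of_isClosed_isBounded hc
  apply Metric.isBounded_closedBall (x := (0:ℂ)) (r := b) |>.subset
  intro z hz
  simpa [Complex.dist_eq] using hz.2

/-- Maximum principle on the annulus with boundary limsup bound. -/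
lemma annulus_max_principle {r R : ℝ} (hr : 0 < r) (hrR : r < R) (g : ℂ → ℂ) (C : ℝ)
    (hg : DifferentiableOn ℂ g (annulus r R))
    (hb : ∀ η > (0:ℝ), ∃ δ > (0:ℝ), ∀ z ∈ annulus r R,
      (‖z‖ < r + δ ∨ R - δ < ‖z‖) → ‖g z‖ ≤ C + η) :
    ∀ z ∈ annulus r R, ‖g z‖ ≤ C := by
  intro z₀ hz₀
  by_contra hgt
  push_neg at hgt
  set η := (‖g z₀‖ - C) / 2 with hη
  have hηpos : 0 < η := by simp [hη]; linarith
  have hCη : C + η < ‖g z₀‖ := by simp [hη]; linarith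
  obtain ⟨δ₀, hδ₀, hstrip⟩ := hb η hηpos
  set δ := min δ₀ ((R - r) / 2) with hδdef
  have hδpos : 0 < δ := lt_min hδ₀ (by linarith)
  have hδle : δ ≤ δ₀ := min_le_left _ _
  have hδle2 : δ ≤ (R - r) / 2 := min_le_right _ _
  set K : Set ℂ := {z : ℂ | r + δ ≤ ‖z‖ ∧ ‖z‖ ≤ R - δ} with hK
  have hKsub : K ⊆ annulus r R := fun z hz => ⟨by linarith [hz.1], by linarith [hz.2]⟩
  have hcover : ∀ z ∈ annulus r R, z ∉ K →
      ‖z‖ < r + δ₀ ∨ R - δ₀ < ‖z‖ := by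
    intro z hz hzk
    rcases not_and_or.mp hzk with h | h
    · left; push_neg at h; linarith
    · right; push_neg at h; linarith
  have hKne : K.Nonempty := by
    have hm : ‖(((r + R) / 2 : ℝ) : ℂ)‖ = (r + R) / 2 := by
      rw [Complex.norm_real, Real.norm_eq_abs, _root_.abs_of_nonneg (by linarith)]
    exact ⟨(((r + R) / 2 : ℝ) : ℂ), by rw [Set.mem_setOf_eq, hm]; constructor <;> linarith⟩
  -- max of |g| on compact K
  have hgc : ContinuousOn (fun z => ‖g z‖) K :=
    (continuous_norm.comp_continuousOn ((hg.continuousOn).mono hKsub))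
  obtain ⟨p, hpK, hpmax⟩ := isCompact_closed_annulus.exists_isMaxOn hKne hgc
  have hz₀K : z₀ ∈ K := by
    by_contra h
    exact absurd (hstrip z₀ hz₀ (hcover z₀ hz₀ h)) (not_le.mpr hCη)
  have hpC : C + η < ‖g p‖ := lt_of_lt_of_le hCη (hpmax hz₀K)
  have hmax : IsMaxOn (norm ∘ g) (annulus r R) p := by
    intro z hz
    show ‖g z‖ ≤ ‖g p‖
    by_cases hzK : z ∈ K
    · exact hpmax hzK
    · exact le_trans (hstrip z hz (hcover z hz hzK)) hpC.le
  have hconst := Complex.eqOn_of_isPreconnected_of_isMaxOn_norm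
    (isPreconnected_annulus hr.le) (isOpen_annulus r R) hg (hKsub hpK) hmax
  -- a strip point
  set s := r + min δ₀ (R - r) / 2 with hs
  have hmin : 0 < min δ₀ (R - r) := lt_min hδ₀ (by linarith)
  have hminle : min δ₀ (R - r) ≤ R - r := min_le_right _ _
  have hminle' : min δ₀ (R - r) ≤ δ₀ := min_le_left _ _
  have hs0 : 0 < s := by rw [hs]; linarith
  have hsmem : (s : ℂ) ∈ annulus r R :=
    mem_annulus_of_real (by rw [hs]; linarith) (by rw [hs]; linarith) hs0.le
  have habs : ‖(s : ℂ)‖ = s := by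
    rw [Complex.norm_real, Real.norm_eq_abs, _root_.abs_of_nonneg hs0.le]
  have hstrips : ‖(s : ℂ)‖ < r + δ₀ := by rw [habs, hs]; linarith
  have hle := hstrip _ hsmem (Or.inl hstrips)
  have heq := hconst hsmem
  simp only [Function.const_apply] at heq
  rw [heq] at hle
  linarith

lemma annulus_proper (r₁ R₁ r₂ R₂ : ℝ) (hr₁ : 0 < r₁) (hR₁ : r₁ < R₁)
    (hr₂ : 0 < r₂) (hR₂ : r₂ < R₂)
    (f : ℂ → ℂ) (hf : DifferentiableOn ℂ f (annulus r₁ R₁))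
    (hbij : Set.BijOn f (annulus r₁ R₁) (annulus r₂ R₂)) :
    ∀ ε > (0:ℝ), ∃ δ > (0:ℝ), ∀ z ∈ annulus r₁ R₁,
      (‖z‖ < r₁ + δ ∨ R₁ - δ < ‖z‖) →
      (‖f z‖ < r₂ + ε ∨ R₂ - ε < ‖f z‖) := by
  intro ε hε
  by_contra hcon
  push_neg at hcon
  -- build a sequence approaching the boundary whose images stay in a compact set
  have hseq : ∀ n : ℕ, ∃ z, z ∈ annulus r₁ R₁ ∧
      (‖z‖ < r₁ + 1 / (n + 1) ∨ R₁ - 1 / (n + 1) < ‖z‖) ∧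
      r₂ + ε ≤ ‖f z‖ ∧ ‖f z‖ ≤ R₂ - ε := by
    intro n
    obtain ⟨z, hz, hstrip, h1, h2⟩ := hcon (1 / (n + 1)) (by positivity)
    exact ⟨z, hz, hstrip, h1, h2⟩
  choose u hu₁ hu₂ hu₃ hu₄ using hseq
  -- u n lies in the compact closed annulus
  have huC : ∀ n, u n ∈ {z : ℂ | r₁ ≤ ‖z‖ ∧ ‖z‖ ≤ R₁} :=
    fun n => ⟨(hu₁ n).1.le, (hu₁ n).2.le⟩
  obtain ⟨zs, -, φ, hφ, hφlim⟩ := isCompact_closed_annulus.tendsto_subseq huC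
  have hfK : ∀ n, f (u (φ n)) ∈ {w : ℂ | r₂ + ε ≤ ‖w‖ ∧ ‖w‖ ≤ R₂ - ε} :=
    fun n => ⟨hu₃ _, hu₄ _⟩
  obtain ⟨w, hwK, ψ, hψ, hψlim⟩ := isCompact_closed_annulus.tendsto_subseq hfK
  set v : ℕ → ℂ := fun n => u (φ (ψ n)) with hv
  set m : ℕ → ℕ := fun n => φ (ψ n) with hm
  have hmmono : StrictMono m := hφ.comp hψ
  have hvlim : Tendsto v atTop (𝓝 zs) := hφlim.comp hψ.tendsto_atTop
  have hfvlim : Tendsto (fun n => f (v n)) atTop (𝓝 w) := hψlim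
  -- the auxiliary radii tend to the boundary radii
  have hrad : Tendsto (fun n : ℕ => 1 / ((m n : ℝ) + 1)) atTop (𝓝 0) :=
    tendsto_one_div_add_atTop_nhds_zero_nat.comp hmmono.tendsto_atTop
  have habsv : Tendsto (fun n => ‖v n‖) atTop (𝓝 (‖zs‖)) :=
    (continuous_norm.continuousAt.tendsto).comp hvlim
  -- zs is not in the open annulus
  have hzs : zs ∉ annulus r₁ R₁ := by
    intro hzsA
    have hdis : ∀ n, ‖v n‖ < r₁ + 1 / ((m n : ℝ) + 1) ∨
        R₁ - 1 / ((m n : ℝ) + 1) < ‖v n‖ := fun n => hu₂ (m n)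
    have hfreq : (∃ᶠ n in atTop, ‖v n‖ < r₁ + 1 / ((m n : ℝ) + 1)) ∨
        (∃ᶠ n in atTop, R₁ - 1 / ((m n : ℝ) + 1) < ‖v n‖) := by
      rw [← Filter.frequently_or_distrib]
      exact Filter.Eventually.frequently (Filter.Eventually.of_forall hdis)
    rcases hfreq with h | h
    · have hlim : Tendsto (fun n : ℕ => r₁ + 1 / ((m n : ℝ) + 1)) atTop (𝓝 r₁) := by
        simpa using (tendsto_const_nhds.add hrad)
      have hlt : r₁ < ‖zs‖ := hzsA.1
      have hev : ∀ᶠ n in atTop, r₁ + 1 / ((m n : ℝ) + 1) < ‖v n‖ :=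
        hlim.eventually_lt habsv hlt
      obtain ⟨n, h1, h2⟩ := (h.and_eventually hev).exists
      linarith
    · have hlim : Tendsto (fun n : ℕ => R₁ - 1 / ((m n : ℝ) + 1)) atTop (𝓝 R₁) := by
        simpa using (tendsto_const_nhds.sub hrad)
      have hlt : ‖zs‖ < R₁ := hzsA.2
      have hev : ∀ᶠ n in atTop, ‖v n‖ < R₁ - 1 / ((m n : ℝ) + 1) :=
        habsv.eventually_lt hlim hlt
      obtain ⟨n, h1, h2⟩ := (h.and_eventually hev).exists
      linarith
  -- w is in the open annulus A₂, so w = f z' for some z' in A₁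
  have hwA₂ : w ∈ annulus r₂ R₂ := ⟨by linarith [hwK.1], by linarith [hwK.2]⟩
  obtain ⟨z', hz'A, hz'w⟩ := hbij.surjOn hwA₂
  -- f is an open map on A₁
  have hanal : AnalyticOnNhd ℂ f (annulus r₁ R₁) :=
    hf.analyticOnNhd (isOpen_annulus r₁ R₁)
  have hopen : ∀ s ⊆ annulus r₁ R₁, IsOpen s → IsOpen (f '' s) := by
    rcases hanal.is_constant_or_isOpen (isPreconnected_annulus hr₁.le) with ⟨c, hc⟩ | h
    · exfalso
      have m1 : ((((3*r₁ + R₁)/4 : ℝ)) : ℂ) ∈ annulus r₁ R₁ :=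
        mem_annulus_of_real (by linarith) (by linarith) (by linarith)
      have m2 : ((((r₁ + 3*R₁)/4 : ℝ)) : ℂ) ∈ annulus r₁ R₁ :=
        mem_annulus_of_real (by linarith) (by linarith) (by linarith)
      have := hbij.injOn m1 m2 (by rw [hc _ m1, hc _ m2])
      have : ((3*r₁ + R₁)/4 : ℝ) = ((r₁ + 3*R₁)/4 : ℝ) := by
        exact_mod_cast this
      linarith
    · exact h
  -- choose a small ball around z'
  obtain ⟨ρ₀, hρ₀, hball⟩ := Metric.isOpen_iff.mp (isOpen_annulus r₁ R₁) z' hz'A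
  have hzz' : 0 < dist zs z' := dist_pos.mpr (fun h => hzs (h ▸ hz'A))
  set ρ := min (ρ₀ / 2) (dist zs z' / 2) with hρ
  have hρpos : 0 < ρ := lt_min (by linarith) (by linarith)
  have hballsub : Metric.ball z' ρ ⊆ annulus r₁ R₁ :=
    subset_trans (Metric.ball_subset_ball (le_trans (min_le_left _ _) (by linarith))) hball
  have hO : IsOpen (f '' Metric.ball z' ρ) := hopen _ hballsub Metric.isOpen_ball
  have hwO : w ∈ f '' Metric.ball z' ρ :=
    ⟨z', Metric.mem_ball_self hρpos, hz'w⟩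
  -- eventually f (v n) ∈ O, and eventually v n ∉ ball z' ρ; contradiction via injectivity
  have hev1 : ∀ᶠ n in atTop, f (v n) ∈ f '' Metric.ball z' ρ :=
    hfvlim.eventually (hO.mem_nhds hwO)
  have hev2 : ∀ᶠ n in atTop, ρ < dist (v n) z' := by
    have hdist : Tendsto (fun n => dist (v n) z') atTop (𝓝 (dist zs z')) :=
      (Continuous.dist continuous_id continuous_const).continuousAt.tendsto.comp hvlim
    have : ρ < dist zs z' := lt_of_le_of_lt (min_le_right _ _) (by linarith)
    exact hdist.eventually_const_lt this
  obtain ⟨n, hn1, hn2⟩ := (hev1.and hev2).exists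
  obtain ⟨b, hb, hfb⟩ := hn1
  have : v n = b := hbij.injOn (hu₁ _) (hballsub hb) hfb.symm
  rw [this] at hn2
  exact absurd hb (by simpa [Metric.mem_ball] using hn2.le.not_gt)

lemma dichotomy_aux (f : ℂ → ℂ) (N : Set ℂ) (hN : IsPreconnected N)
    (hc : ContinuousOn f N) (a b : ℝ) (hab : a ≤ b)
    (h : ∀ z ∈ N, ‖f z‖ < a ∨ b < ‖f z‖) :
    (∀ z ∈ N, ‖f z‖ < a) ∨ (∀ z ∈ N, b < ‖f z‖) := by
  have himg : IsPreconnected (f '' N) := hN.image f hc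
  have hsub : f '' N ⊆ ((fun z : ℂ => ‖z‖) ⁻¹' Iio a) ∪ ((fun z : ℂ => ‖z‖) ⁻¹' Ioi b) := by
    rintro _ ⟨z, hz, rfl⟩
    exact (h z hz).imp (fun h' => h') (fun h' => h')
  have hdisj : Disjoint ((fun z : ℂ => ‖z‖) ⁻¹' Iio a) ((fun z : ℂ => ‖z‖) ⁻¹' Ioi b) := by
    rw [Set.disjoint_iff]
    rintro w ⟨h1, h2⟩
    exact absurd (lt_of_le_of_lt hab h2) (not_lt.mpr h1.le)
  rcases himg.subset_or_subset (isOpen_Iio.preimage continuous_norm)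
      (isOpen_Ioi.preimage continuous_norm) hdisj hsub with h' | h'
  · exact Or.inl fun z hz => h' ⟨z, hz, rfl⟩
  · exact Or.inr fun z hz => h' ⟨z, hz, rfl⟩

/-- Inner strip dichotomy. -/
lemma inner_dichotomy (r₁ R₁ : ℝ) (hr₁ : 0 < r₁) (hR₁ : r₁ < R₁) (f : ℂ → ℂ)
    (hf : DifferentiableOn ℂ f (annulus r₁ R₁)) (a b δ₀ : ℝ) (hab : a ≤ b) (hδ₀ : 0 < δ₀)
    (h : ∀ z ∈ annulus r₁ R₁, ‖z‖ < r₁ + δ₀ →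
      ‖f z‖ < a ∨ b < ‖f z‖) :
    ∃ δ > (0:ℝ), δ ≤ (R₁ - r₁) / 2 ∧
      ((∀ z ∈ annulus r₁ R₁, ‖z‖ < r₁ + δ → ‖f z‖ < a) ∨
       (∀ z ∈ annulus r₁ R₁, ‖z‖ < r₁ + δ → b < ‖f z‖)) := by
  set δ := min δ₀ ((R₁ - r₁) / 2) with hδ
  have hδpos : 0 < δ := lt_min hδ₀ (by linarith)
  have hδ1 : δ ≤ δ₀ := min_le_left _ _
  have hδ2 : δ ≤ (R₁ - r₁) / 2 := min_le_right _ _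
  set N := annulus r₁ (r₁ + δ) with hN
  have hNsub : N ⊆ annulus r₁ R₁ := fun z hz => ⟨hz.1, by linarith [hz.2]⟩
  have hNpre : IsPreconnected N := isPreconnected_annulus hr₁.le
  have hmem : ∀ z ∈ annulus r₁ R₁, ‖z‖ < r₁ + δ → z ∈ N :=
    fun z hz h' => ⟨hz.1, h'⟩
  rcases dichotomy_aux f N hNpre (hf.continuousOn.mono hNsub) a b hab
      (fun z hz => h z (hNsub hz) (by linarith [hz.2, hδ1])) with h' | h'
  · exact ⟨δ, hδpos, hδ2, Or.inl fun z hz hlt => h' z (hmem z hz hlt)⟩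
  · exact ⟨δ, hδpos, hδ2, Or.inr fun z hz hlt => h' z (hmem z hz hlt)⟩

/-- Outer strip dichotomy. -/
lemma outer_dichotomy (r₁ R₁ : ℝ) (hr₁ : 0 < r₁) (hR₁ : r₁ < R₁) (f : ℂ → ℂ)
    (hf : DifferentiableOn ℂ f (annulus r₁ R₁)) (a b δ₀ : ℝ) (hab : a ≤ b) (hδ₀ : 0 < δ₀)
    (h : ∀ z ∈ annulus r₁ R₁, R₁ - δ₀ < ‖z‖ →
      ‖f z‖ < a ∨ b < ‖f z‖) :
    ∃ δ > (0:ℝ), δ ≤ (R₁ - r₁) / 2 ∧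
      ((∀ z ∈ annulus r₁ R₁, R₁ - δ < ‖z‖ → ‖f z‖ < a) ∨
       (∀ z ∈ annulus r₁ R₁, R₁ - δ < ‖z‖ → b < ‖f z‖)) := by
  set δ := min δ₀ ((R₁ - r₁) / 2) with hδ
  have hδpos : 0 < δ := lt_min hδ₀ (by linarith)
  have hδ1 : δ ≤ δ₀ := min_le_left _ _
  have hδ2 : δ ≤ (R₁ - r₁) / 2 := min_le_right _ _
  set N := annulus (R₁ - δ) R₁ with hN
  have hNsub : N ⊆ annulus r₁ R₁ := fun z hz => ⟨by linarith [hz.1], hz.2⟩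
  have hNpre : IsPreconnected N := isPreconnected_annulus (by linarith)
  have hmem : ∀ z ∈ annulus r₁ R₁, R₁ - δ < ‖z‖ → z ∈ N :=
    fun z hz h' => ⟨h', hz.2⟩
  rcases dichotomy_aux f N hNpre (hf.continuousOn.mono hNsub) a b hab
      (fun z hz => h z (hNsub hz) (by linarith [hz.1, hδ1])) with h' | h'
  · exact ⟨δ, hδpos, hδ2, Or.inl fun z hz hlt => h' z (hmem z hz hlt)⟩
  · exact ⟨δ, hδpos, hδ2, Or.inr fun z hz hlt => h' z (hmem z hz hlt)⟩

section Sides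
variable (r₁ R₁ r₂ R₂ : ℝ) (f : ℂ → ℂ)

/-- f is eventually low (resp. high) near the inner boundary. -/
def InnerLow : Prop := ∀ ε, 0 < ε → ε ≤ (R₂ - r₂) / 3 → ∃ δ > (0:ℝ),
  ∀ z ∈ annulus r₁ R₁, ‖z‖ < r₁ + δ → ‖f z‖ < r₂ + ε
def InnerHigh : Prop := ∀ ε, 0 < ε → ε ≤ (R₂ - r₂) / 3 → ∃ δ > (0:ℝ),
  ∀ z ∈ annulus r₁ R₁, ‖z‖ < r₁ + δ → R₂ - ε < ‖f z‖
def OuterLow : Prop := ∀ ε, 0 < ε → ε ≤ (R₂ - r₂) / 3 → ∃ δ > (0:ℝ),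
  ∀ z ∈ annulus r₁ R₁, R₁ - δ < ‖z‖ → ‖f z‖ < r₂ + ε
def OuterHigh : Prop := ∀ ε, 0 < ε → ε ≤ (R₂ - r₂) / 3 → ∃ δ > (0:ℝ),
  ∀ z ∈ annulus r₁ R₁, R₁ - δ < ‖z‖ → R₂ - ε < ‖f z‖

end Sides

lemma sides (r₁ R₁ r₂ R₂ : ℝ) (hr₁ : 0 < r₁) (hR₁ : r₁ < R₁) (hr₂ : 0 < r₂) (hR₂ : r₂ < R₂)
    (f : ℂ → ℂ) (hf : DifferentiableOn ℂ f (annulus r₁ R₁))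
    (hbij : Set.BijOn f (annulus r₁ R₁) (annulus r₂ R₂)) :
    (InnerLow r₁ R₁ r₂ R₂ f ∧ OuterHigh r₁ R₁ r₂ R₂ f) ∨
    (InnerHigh r₁ R₁ r₂ R₂ f ∧ OuterLow r₁ R₁ r₂ R₂ f) := by
  have hprop := annulus_proper r₁ R₁ r₂ R₂ hr₁ hR₁ hr₂ hR₂ f hf hbij
  set ε₀ := (R₂ - r₂) / 3 with hε₀
  have hε₀pos : 0 < ε₀ := by rw [hε₀]; linarith
  have hkey : r₂ + ε₀ ≤ R₂ - ε₀ := by rw [hε₀]; linarith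
  -- test points
  have htestI : ∀ d : ℝ, 0 < d → ∃ z ∈ annulus r₁ R₁, ‖z‖ < r₁ + d := by
    intro d hd
    have h1 : 0 < min d (R₁ - r₁) := lt_min hd (by linarith)
    have h2 : min d (R₁ - r₁) ≤ d := min_le_left _ _
    have h3 : min d (R₁ - r₁) ≤ R₁ - r₁ := min_le_right _ _
    refine ⟨((r₁ + min d (R₁ - r₁) / 2 : ℝ) : ℂ),
      mem_annulus_of_real (by linarith) (by linarith) (by linarith), ?_⟩
    rw [Complex.norm_real, Real.norm_eq_abs, _root_.abs_of_pos (by linarith)]; linarith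
  have htestO : ∀ d : ℝ, 0 < d → ∃ z ∈ annulus r₁ R₁, R₁ - d < ‖z‖ := by
    intro d hd
    have h1 : 0 < min d (R₁ - r₁) := lt_min hd (by linarith)
    have h2 : min d (R₁ - r₁) ≤ d := min_le_left _ _
    have h3 : min d (R₁ - r₁) ≤ R₁ - r₁ := min_le_right _ _
    refine ⟨((R₁ - min d (R₁ - r₁) / 2 : ℝ) : ℂ),
      mem_annulus_of_real (by linarith) (by linarith) (by linarith), ?_⟩
    rw [Complex.norm_real, Real.norm_eq_abs, _root_.abs_of_pos (by linarith)]; linarith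
  -- inner side dichotomy, uniform in ε
  have hInner : InnerLow r₁ R₁ r₂ R₂ f ∨ InnerHigh r₁ R₁ r₂ R₂ f := by
    obtain ⟨δ₀, hδ₀pos, hp₀⟩ := hprop ε₀ hε₀pos
    obtain ⟨δI, hδIpos, hδIle, hI⟩ := inner_dichotomy r₁ R₁ hr₁ hR₁ f hf
      (r₂ + ε₀) (R₂ - ε₀) δ₀ hkey hδ₀pos (fun z hz h' => hp₀ z hz (Or.inl h'))
    have main : ∀ ε, 0 < ε → ε ≤ ε₀ → ∃ δ > (0:ℝ),
        ((∀ z ∈ annulus r₁ R₁, ‖z‖ < r₁ + δ → ‖f z‖ < r₂ + ε) ∨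
         (∀ z ∈ annulus r₁ R₁, ‖z‖ < r₁ + δ → R₂ - ε < ‖f z‖)) ∧
        δ ≤ δI := by
      intro ε hε hεle
      obtain ⟨δ₁, hδ₁pos, hp₁⟩ := hprop ε hε
      obtain ⟨δ₂, hδ₂pos, hδ₂le, h₂⟩ := inner_dichotomy r₁ R₁ hr₁ hR₁ f hf
        (r₂ + ε) (R₂ - ε) δ₁ (by linarith) hδ₁pos (fun z hz h' => hp₁ z hz (Or.inl h'))
      refine ⟨min δ₂ δI, lt_min hδ₂pos hδIpos, ?_, min_le_right _ _⟩
      rcases h₂ with h₂ | h₂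
      · exact Or.inl fun z hz hlt => h₂ z hz (lt_of_lt_of_le hlt (by
          have := min_le_left δ₂ δI; linarith))
      · exact Or.inr fun z hz hlt => h₂ z hz (lt_of_lt_of_le hlt (by
          have := min_le_left δ₂ δI; linarith))
    rcases hI with hLow | hHigh
    · left
      intro ε hε hεle
      obtain ⟨δ, hδpos, hor, hδle⟩ := main ε hε hεle
      rcases hor with h | h
      · exact ⟨δ, hδpos, h⟩
      · exfalso
        obtain ⟨z, hz, hzlt⟩ := htestI δ hδpos
        have h1 := hLow z hz (by linarith)
        have h2 := h z hz hzlt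
        linarith
    · right
      intro ε hε hεle
      obtain ⟨δ, hδpos, hor, hδle⟩ := main ε hε hεle
      rcases hor with h | h
      · exfalso
        obtain ⟨z, hz, hzlt⟩ := htestI δ hδpos
        have h1 := hHigh z hz (by linarith)
        have h2 := h z hz hzlt
        linarith
      · exact ⟨δ, hδpos, h⟩
  have hOuter : OuterLow r₁ R₁ r₂ R₂ f ∨ OuterHigh r₁ R₁ r₂ R₂ f := by
    obtain ⟨δ₀, hδ₀pos, hp₀⟩ := hprop ε₀ hε₀pos
    obtain ⟨δI, hδIpos, hδIle, hI⟩ := outer_dichotomy r₁ R₁ hr₁ hR₁ f hf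
      (r₂ + ε₀) (R₂ - ε₀) δ₀ hkey hδ₀pos (fun z hz h' => hp₀ z hz (Or.inr h'))
    have main : ∀ ε, 0 < ε → ε ≤ ε₀ → ∃ δ > (0:ℝ),
        ((∀ z ∈ annulus r₁ R₁, R₁ - δ < ‖z‖ → ‖f z‖ < r₂ + ε) ∨
         (∀ z ∈ annulus r₁ R₁, R₁ - δ < ‖z‖ → R₂ - ε < ‖f z‖)) ∧
        δ ≤ δI := by
      intro ε hε hεle
      obtain ⟨δ₁, hδ₁pos, hp₁⟩ := hprop ε hε
      obtain ⟨δ₂, hδ₂pos, hδ₂le, h₂⟩ := outer_dichotomy r₁ R₁ hr₁ hR₁ f hf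
        (r₂ + ε) (R₂ - ε) δ₁ (by linarith) hδ₁pos (fun z hz h' => hp₁ z hz (Or.inr h'))
      refine ⟨min δ₂ δI, lt_min hδ₂pos hδIpos, ?_, min_le_right _ _⟩
      rcases h₂ with h₂ | h₂
      · exact Or.inl fun z hz hlt => h₂ z hz (lt_of_le_of_lt (by
          have := min_le_left δ₂ δI; linarith) hlt)
      · exact Or.inr fun z hz hlt => h₂ z hz (lt_of_le_of_lt (by
          have := min_le_left δ₂ δI; linarith) hlt)
    rcases hI with hLow | hHigh
    · left
      intro ε hε hεle
      obtain ⟨δ, hδpos, hor, hδle⟩ := main ε hε hεle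
      rcases hor with h | h
      · exact ⟨δ, hδpos, h⟩
      · exfalso
        obtain ⟨z, hz, hzlt⟩ := htestO δ hδpos
        have h1 := hLow z hz (by linarith)
        have h2 := h z hz hzlt
        linarith
    · right
      intro ε hε hεle
      obtain ⟨δ, hδpos, hor, hδle⟩ := main ε hε hεle
      rcases hor with h | h
      · exfalso
        obtain ⟨z, hz, hzlt⟩ := htestO δ hδpos
        have h1 := hHigh z hz (by linarith)
        have h2 := h z hz hzlt
        linarith
      · exact ⟨δ, hδpos, h⟩
  -- f never vanishes on the annulus
  have hfne : ∀ z ∈ annulus r₁ R₁, f z ≠ 0 := by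
    intro z hz h0
    have := (hbij.mapsTo hz).1
    rw [h0] at this; simp at this; linarith
  obtain ⟨w0, hw0⟩ : (annulus r₁ R₁).Nonempty :=
    ⟨((r₁ + R₁)/2 : ℝ), mem_annulus_of_real (by linarith) (by linarith) (by linarith)⟩
  -- eliminate (Low, Low)
  have hnotLL : ¬(InnerLow r₁ R₁ r₂ R₂ f ∧ OuterLow r₁ R₁ r₂ R₂ f) := by
    rintro ⟨hIL, hOL⟩
    have hbound : ∀ z ∈ annulus r₁ R₁, ‖f z‖ ≤ r₂ := by
      apply annulus_max_principle hr₁ hR₁ f r₂ hf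
      intro η hη
      set ε := min η ε₀ with hεdef
      have hεpos : 0 < ε := lt_min hη hε₀pos
      obtain ⟨δi, hδi, hi⟩ := hIL ε hεpos (min_le_right _ _)
      obtain ⟨δo, hδo, ho⟩ := hOL ε hεpos (min_le_right _ _)
      refine ⟨min δi δo, lt_min hδi hδo, ?_⟩
      intro z hz hstrip
      have hεη : ε ≤ η := min_le_left _ _
      rcases hstrip with h | h
      · have := hi z hz (lt_of_lt_of_le h (by have := min_le_left δi δo; linarith))
        linarith
      · have := ho z hz (lt_of_le_of_lt (by have := min_le_right δi δo; linarith) h)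
        linarith
    have h1 := hbound w0 hw0
    have h2 := (hbij.mapsTo hw0).1
    linarith
  -- eliminate (High, High)
  have hnotHH : ¬(InnerHigh r₁ R₁ r₂ R₂ f ∧ OuterHigh r₁ R₁ r₂ R₂ f) := by
    rintro ⟨hIH, hOH⟩
    have hbound : ∀ z ∈ annulus r₁ R₁, ‖(f z)⁻¹‖ ≤ R₂⁻¹ := by
      apply annulus_max_principle hr₁ hR₁ _ _ (hf.inv hfne)
      intro η hη
      set ε := min ε₀ (η * R₂ * R₂ / (1 + η * R₂)) with hεdef
      have hR₂pos : 0 < R₂ := by linarith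
      have hd1 : 0 < η * R₂ * R₂ := mul_pos (mul_pos hη hR₂pos) hR₂pos
      have hd2 : 0 < 1 + η * R₂ := by nlinarith [mul_pos hη hR₂pos]
      have hεpos : 0 < ε := lt_min hε₀pos (div_pos hd1 hd2)
      have hεle : ε ≤ ε₀ := min_le_left _ _
      have hεle' : ε ≤ (R₂ - r₂) / 3 := hεle
      have hεR : ε < R₂ := by linarith
      have hεb : ε * (1 + η * R₂) ≤ η * R₂ * R₂ :=
        (le_div_iff₀ hd2).mp (min_le_right _ _)
      have hinv : (R₂ - ε)⁻¹ ≤ R₂⁻¹ + η := by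
        rw [inv_eq_one_div, div_le_iff₀ (by linarith)]
        have hR₂i : R₂⁻¹ * R₂ = 1 := inv_mul_cancel₀ (by linarith)
        have h3 : 0 ≤ R₂⁻¹ := inv_nonneg.mpr (by linarith)
        nlinarith [mul_le_mul_of_nonneg_right hεb h3]
      obtain ⟨δi, hδi, hi⟩ := hIH ε hεpos hεle'
      obtain ⟨δo, hδo, ho⟩ := hOH ε hεpos hεle'
      refine ⟨min δi δo, lt_min hδi hδo, ?_⟩
      intro z hz hstrip
      have hfz : R₂ - ε < ‖f z‖ := by
        rcases hstrip with h | h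
        · exact hi z hz (lt_of_lt_of_le h (by have := min_le_left δi δo; linarith))
        · exact ho z hz (lt_of_le_of_lt (by have := min_le_right δi δo; linarith) h)
      rw [Pi.inv_apply, norm_inv]
      calc (‖f z‖)⁻¹ ≤ (R₂ - ε)⁻¹ := inv_anti₀ (by linarith) hfz.le
        _ ≤ R₂⁻¹ + η := hinv
    have h1 := hbound w0 hw0
    rw [norm_inv] at h1
    have h2 := (hbij.mapsTo hw0).1
    have h3 := (hbij.mapsTo hw0).2
    have h4 : R₂ ≤ ‖f w0‖ := by
      rwa [inv_le_inv₀ (by linarith) (by linarith)] at h1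
    linarith
  rcases hInner with hI | hI <;> rcases hOuter with hO | hO
  · exact absurd ⟨hI, hO⟩ hnotLL
  · exact Or.inl ⟨hI, hO⟩
  · exact Or.inr ⟨hI, hO⟩
  · exact absurd ⟨hI, hO⟩ hnotHH

set_option maxHeartbeats 1600000 in
theorem conformal_map_annuli_classification
    (r₁ R₁ r₂ R₂ : ℝ) (hr₁ : 0 < r₁) (hR₁ : r₁ < R₁) (hr₂ : 0 < r₂) (hR₂ : r₂ < R₂)
    (hratio : R₁ / r₁ = R₂ / r₂) (f : ℂ → ℂ)
    (hf : DifferentiableOn ℂ f (annulus r₁ R₁))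
    (hbij : Set.BijOn f (annulus r₁ R₁) (annulus r₂ R₂)) :
    ∃ l : ℂ,
      ((∀ z ∈ annulus r₁ R₁, f z = l * z) ∧ ‖l‖ = r₂ / r₁) ∨
      ((∀ z ∈ annulus r₁ R₁, f z = l / z) ∧ ‖l‖ = r₂ * R₁) := by
  have hR₁pos : 0 < R₁ := lt_trans hr₁ hR₁
  have hR₂pos : 0 < R₂ := lt_trans hr₂ hR₂
  have hratio' : R₁ * r₂ = R₂ * r₁ := (div_eq_div_iff hr₁.ne' hr₂.ne').mp hratio
  have hr₁c : (r₁ : ℂ) ≠ 0 := Complex.ofReal_ne_zero.mpr hr₁.ne'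
  have hr₂c : (r₂ : ℂ) ≠ 0 := Complex.ofReal_ne_zero.mpr hr₂.ne'
  have hR₁c : (R₁ : ℂ) ≠ 0 := Complex.ofReal_ne_zero.mpr hR₁pos.ne'
  have hzne : ∀ z ∈ annulus r₁ R₁, z ≠ 0 := by
    intro z hz h0
    rw [h0] at hz; simp [annulus] at hz; linarith [hz.1]
  have hfne : ∀ z ∈ annulus r₁ R₁, f z ≠ 0 := by
    intro z hz h0
    have := (hbij.mapsTo hz).1
    rw [h0] at this; simp at this; linarith
  have hw0 : (((r₁ + R₁)/2 : ℝ) : ℂ) ∈ annulus r₁ R₁ :=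
    mem_annulus_of_real (by linarith) (by linarith) (by linarith)
  set w0 : ℂ := (((r₁ + R₁)/2 : ℝ) : ℂ)
  rcases sides r₁ R₁ r₂ R₂ hr₁ hR₁ hr₂ hR₂ f hf hbij with ⟨hIL, hOH⟩ | ⟨hIH, hOL⟩
  · -- f(z) = l·z case
    set g : ℂ → ℂ := fun z => (↑r₁ * f z) / (↑r₂ * z) with hg
    set g' : ℂ → ℂ := fun z => (↑r₂ * z) / (↑r₁ * f z) with hg'
    have hgd : DifferentiableOn ℂ g (annulus r₁ R₁) :=
      (hf.const_mul _).div ((differentiable_id.const_mul _).differentiableOn)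
        (fun z hz => mul_ne_zero hr₂c (hzne z hz))
    have hgd' : DifferentiableOn ℂ g' (annulus r₁ R₁) :=
      ((differentiable_id.const_mul _).differentiableOn).div (hf.const_mul _)
        (fun z hz => mul_ne_zero hr₁c (hfne z hz))
    have habsg : ∀ z, ‖g z‖ = (r₁ * ‖f z‖) / (r₂ * ‖z‖) := by
      intro z
      rw [hg]
      simp only [norm_div, norm_mul, Complex.norm_real, Real.norm_eq_abs,
        _root_.abs_of_pos hr₁, _root_.abs_of_pos hr₂]
    have habsg' : ∀ z, ‖g' z‖ = (r₂ * ‖z‖) / (r₁ * ‖f z‖) := by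
      intro z
      rw [hg']
      simp only [norm_div, norm_mul, Complex.norm_real, Real.norm_eq_abs,
        _root_.abs_of_pos hr₁, _root_.abs_of_pos hr₂]
    have hub : ∀ z ∈ annulus r₁ R₁, ‖g z‖ ≤ 1 := by
      apply annulus_max_principle hr₁ hR₁ g 1 hgd
      intro η hη
      set ε := min ((R₂ - r₂)/3) (η * r₂) with hεdef
      have hεpos : 0 < ε := lt_min (by linarith) (mul_pos hη hr₂)
      have hεr : ε ≤ η * r₂ := min_le_right _ _
      obtain ⟨δi, hδipos, hi⟩ := hIL ε hεpos (min_le_left _ _)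
      set δ := min δi (η * R₁ / (1 + η)) with hδdef
      have hδpos : 0 < δ := lt_min hδipos (div_pos (mul_pos hη hR₁pos) (by linarith))
      have hδb : δ * (1 + η) ≤ η * R₁ := (le_div_iff₀ (by linarith)).mp (min_le_right _ _)
      refine ⟨δ, hδpos, ?_⟩
      intro z hz hstrip
      have hs1 : r₁ < ‖z‖ := hz.1
      have hs2 : ‖z‖ < R₁ := hz.2
      have ha1 : r₂ < ‖f z‖ := (hbij.mapsTo hz).1
      have ha2 : ‖f z‖ < R₂ := (hbij.mapsTo hz).2
      rw [habsg z, div_le_iff₀ (mul_pos hr₂ (lt_trans hr₁ hs1))]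
      rcases hstrip with h | h
      · have hfz := hi z hz (lt_of_lt_of_le h (by
          have := min_le_left δi (η * R₁ / (1 + η)); linarith))
        have h1 : r₁ * ‖f z‖ ≤ r₁ * (r₂ + η * r₂) :=
          mul_le_mul_of_nonneg_left (by linarith) hr₁.le
        have h2 : (1 + η) * (r₂ * r₁) ≤ (1 + η) * (r₂ * ‖z‖) :=
          mul_le_mul_of_nonneg_left (mul_le_mul_of_nonneg_left hs1.le hr₂.le) (by linarith)
        nlinarith [h1, h2]
      · have h1 : r₁ * ‖f z‖ ≤ r₁ * R₂ :=
          mul_le_mul_of_nonneg_left ha2.le hr₁.le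
        have h2 : (1 + η) * (r₂ * (R₁ - δ)) ≤ (1 + η) * (r₂ * ‖z‖) :=
          mul_le_mul_of_nonneg_left (mul_le_mul_of_nonneg_left (by linarith) hr₂.le)
            (by linarith)
        have h3 : r₂ * (δ * (1 + η)) ≤ r₂ * (η * R₁) := mul_le_mul_of_nonneg_left hδb hr₂.le
        nlinarith [h1, h2, h3, hratio']
    have hlb : ∀ z ∈ annulus r₁ R₁, ‖g' z‖ ≤ 1 := by
      apply annulus_max_principle hr₁ hR₁ g' 1 hgd'
      intro η hη
      set ε := min ((R₂ - r₂)/3) (η * R₂ / (1 + η)) with hεdef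
      have hεpos : 0 < ε := lt_min (by linarith) (div_pos (mul_pos hη hR₂pos) (by linarith))
      have hεb : ε * (1 + η) ≤ η * R₂ := (le_div_iff₀ (by linarith)).mp (min_le_right _ _)
      obtain ⟨δo, hδopos, ho⟩ := hOH ε hεpos (min_le_left _ _)
      set δ := min δo (η * r₁) with hδdef
      have hδpos : 0 < δ := lt_min hδopos (mul_pos hη hr₁)
      have hδr : δ ≤ η * r₁ := min_le_right _ _
      refine ⟨δ, hδpos, ?_⟩
      intro z hz hstrip
      have hs1 : r₁ < ‖z‖ := hz.1
      have hs2 : ‖z‖ < R₁ := hz.2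
      have ha1 : r₂ < ‖f z‖ := (hbij.mapsTo hz).1
      have ha2 : ‖f z‖ < R₂ := (hbij.mapsTo hz).2
      rw [habsg' z, div_le_iff₀ (mul_pos hr₁ (lt_trans hr₂ ha1))]
      rcases hstrip with h | h
      · have h1 : r₂ * ‖z‖ ≤ r₂ * (r₁ + η * r₁) :=
          mul_le_mul_of_nonneg_left (by linarith) hr₂.le
        have h2 : (1 + η) * (r₁ * r₂) ≤ (1 + η) * (r₁ * ‖f z‖) :=
          mul_le_mul_of_nonneg_left (mul_le_mul_of_nonneg_left ha1.le hr₁.le) (by linarith)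
        nlinarith [h1, h2]
      · have hfz := ho z hz (lt_of_le_of_lt (by
          have := min_le_left δo (η * r₁); linarith) h)
        have h1 : r₂ * ‖z‖ ≤ r₂ * R₁ := mul_le_mul_of_nonneg_left hs2.le hr₂.le
        have h2 : (1 + η) * (r₁ * (R₂ - ε)) ≤ (1 + η) * (r₁ * ‖f z‖) :=
          mul_le_mul_of_nonneg_left (mul_le_mul_of_nonneg_left (by linarith) hr₁.le)
            (by linarith)
        have h3 : r₁ * (ε * (1 + η)) ≤ r₁ * (η * R₂) := mul_le_mul_of_nonneg_left hεb hr₁.le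
        nlinarith [h1, h2, h3, hratio']
    have heq1 : ∀ z ∈ annulus r₁ R₁, ‖g z‖ = 1 := by
      intro z hz
      have hs1 : r₁ < ‖z‖ := hz.1
      have ha1 : r₂ < ‖f z‖ := (hbij.mapsTo hz).1
      have hval : ‖g z‖ * ‖g' z‖ = 1 := by
        rw [habsg z, habsg' z, div_mul_div_comm,
          mul_comm (r₂ * ‖z‖) (r₁ * ‖f z‖)]
        exact div_self (mul_pos (mul_pos hr₁ (lt_trans hr₂ ha1))
          (mul_pos hr₂ (lt_trans hr₁ hs1))).ne'
      have h0x : 0 ≤ ‖g z‖ := norm_nonneg _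
      have hy := hlb z hz
      have hmul := mul_le_mul_of_nonneg_left hy h0x
      rw [hval, mul_one] at hmul
      exact le_antisymm (hub z hz) hmul
    have hmax : IsMaxOn (norm ∘ g) (annulus r₁ R₁) w0 := by
      intro z hz
      show ‖g z‖ ≤ ‖g w0‖
      rw [heq1 z hz, heq1 w0 hw0]
    have hconst := Complex.eqOn_of_isPreconnected_of_isMaxOn_norm
      (isPreconnected_annulus hr₁.le) (isOpen_annulus r₁ R₁) hgd hw0 hmax
    obtain ⟨l₀, hl₀⟩ : ∃ c : ℂ, g w0 = c := ⟨g w0, rfl⟩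
    have hlabs : ‖l₀‖ = 1 := by rw [← hl₀]; exact heq1 w0 hw0
    have hconst' : ∀ z ∈ annulus r₁ R₁, (↑r₁ * f z) / (↑r₂ * z) = l₀ := by
      intro z hz
      have h : g z = Function.const ℂ (g w0) z := hconst hz
      rw [Function.const_apply, hl₀] at h
      exact h
    refine ⟨l₀ * (↑r₂ / ↑r₁), Or.inl ⟨?_, ?_⟩⟩
    · intro z hz
      have h := hconst' z hz
      rw [div_eq_iff (mul_ne_zero hr₂c (hzne z hz))] at h
      apply mul_left_cancel₀ hr₁c
      rw [h]
      field_simp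
    · rw [norm_mul, norm_div, Complex.norm_real, Real.norm_eq_abs, Complex.norm_real, Real.norm_eq_abs,
        _root_.abs_of_pos hr₁, _root_.abs_of_pos hr₂, hlabs, one_mul]
  · -- f(z) = l/z case
    set g : ℂ → ℂ := fun z => (f z * z) / (↑r₂ * ↑R₁) with hg
    set g' : ℂ → ℂ := fun z => (↑r₂ * ↑R₁) / (f z * z) with hg'
    have hgd : DifferentiableOn ℂ g (annulus r₁ R₁) :=
      (hf.mul differentiable_id.differentiableOn).div
        (differentiableOn_const _) (fun z hz => mul_ne_zero hr₂c hR₁c)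
    have hgd' : DifferentiableOn ℂ g' (annulus r₁ R₁) :=
      (differentiableOn_const _).div (hf.mul differentiable_id.differentiableOn)
        (fun z hz => mul_ne_zero (hfne z hz) (hzne z hz))
    have habsg : ∀ z, ‖g z‖ = (‖f z‖ * ‖z‖) / (r₂ * R₁) := by
      intro z
      rw [hg]
      simp only [norm_div, norm_mul, Complex.norm_real, Real.norm_eq_abs,
        _root_.abs_of_pos hR₁pos, _root_.abs_of_pos hr₂]
    have habsg' : ∀ z, ‖g' z‖ = (r₂ * R₁) / (‖f z‖ * ‖z‖) := by
      intro z
      rw [hg']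
      simp only [norm_div, norm_mul, Complex.norm_real, Real.norm_eq_abs,
        _root_.abs_of_pos hR₁pos, _root_.abs_of_pos hr₂]
    have hub : ∀ z ∈ annulus r₁ R₁, ‖g z‖ ≤ 1 := by
      apply annulus_max_principle hr₁ hR₁ g 1 hgd
      intro η hη
      set ε := min ((R₂ - r₂)/3) (η * r₂) with hεdef
      have hεpos : 0 < ε := lt_min (by linarith) (mul_pos hη hr₂)
      have hεr : ε ≤ η * r₂ := min_le_right _ _
      obtain ⟨δo, hδopos, ho⟩ := hOL ε hεpos (min_le_left _ _)
      set δ := min δo (η * r₁) with hδdef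
      have hδpos : 0 < δ := lt_min hδopos (mul_pos hη hr₁)
      have hδr : δ ≤ η * r₁ := min_le_right _ _
      refine ⟨δ, hδpos, ?_⟩
      intro z hz hstrip
      have hs1 : r₁ < ‖z‖ := hz.1
      have hs2 : ‖z‖ < R₁ := hz.2
      have ha1 : r₂ < ‖f z‖ := (hbij.mapsTo hz).1
      have ha2 : ‖f z‖ < R₂ := (hbij.mapsTo hz).2
      rw [habsg z, div_le_iff₀ (mul_pos hr₂ hR₁pos)]
      have hratη : η * (R₁ * r₂) = η * (R₂ * r₁) := by rw [hratio']
      rcases hstrip with h | h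
      · have h1 : ‖f z‖ * ‖z‖ ≤ R₂ * (r₁ + η * r₁) :=
          mul_le_mul ha2.le (by linarith) (norm_nonneg _) hR₂pos.le
        nlinarith [h1, hratio', hratη]
      · have hfz := ho z hz (lt_of_le_of_lt (by
          have := min_le_left δo (η * r₁); linarith) h)
        have h1 : ‖f z‖ * ‖z‖ ≤ (r₂ + η * r₂) * R₁ :=
          mul_le_mul (by linarith) hs2.le (norm_nonneg _) (by linarith)
        nlinarith [h1]
    have hlb : ∀ z ∈ annulus r₁ R₁, ‖g' z‖ ≤ 1 := by
      apply annulus_max_principle hr₁ hR₁ g' 1 hgd'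
      intro η hη
      set ε := min ((R₂ - r₂)/3) (η * R₂ / (1 + η)) with hεdef
      have hεpos : 0 < ε := lt_min (by linarith) (div_pos (mul_pos hη hR₂pos) (by linarith))
      have hεb : ε * (1 + η) ≤ η * R₂ := (le_div_iff₀ (by linarith)).mp (min_le_right _ _)
      obtain ⟨δi, hδipos, hi⟩ := hIH ε hεpos (min_le_left _ _)
      set δ := min δi (η * R₁ / (1 + η)) with hδdef
      have hδpos : 0 < δ := lt_min hδipos (div_pos (mul_pos hη hR₁pos) (by linarith))
      have hδb : δ * (1 + η) ≤ η * R₁ := (le_div_iff₀ (by linarith)).mp (min_le_right _ _)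
      refine ⟨δ, hδpos, ?_⟩
      intro z hz hstrip
      have hs1 : r₁ < ‖z‖ := hz.1
      have hs2 : ‖z‖ < R₁ := hz.2
      have ha1 : r₂ < ‖f z‖ := (hbij.mapsTo hz).1
      have ha2 : ‖f z‖ < R₂ := (hbij.mapsTo hz).2
      rw [habsg' z, div_le_iff₀ (mul_pos (lt_trans hr₂ ha1) (lt_trans hr₁ hs1))]
      have hratη : η * (R₁ * r₂) = η * (R₂ * r₁) := by rw [hratio']
      rcases hstrip with h | h
      · have hfz := hi z hz (lt_of_lt_of_le h (by
          have := min_le_left δi (η * R₁ / (1 + η)); linarith))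
        have h1 : (1 + η) * ((R₂ - ε) * r₁) ≤ (1 + η) * (‖f z‖ * ‖z‖) :=
          mul_le_mul_of_nonneg_left
            (mul_le_mul hfz.le hs1.le hr₁.le (norm_nonneg _)) (by linarith)
        have h2 : r₁ * (ε * (1 + η)) ≤ r₁ * (η * R₂) := mul_le_mul_of_nonneg_left hεb hr₁.le
        nlinarith [h1, h2, hratio', hratη]
      · have h0 : (1 + η) * (r₂ * ‖z‖) ≤
            (1 + η) * (‖f z‖ * ‖z‖) :=
          mul_le_mul_of_nonneg_left
            (mul_le_mul_of_nonneg_right ha1.le (norm_nonneg _)) (by linarith)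
        have h1 : (1 + η) * (r₂ * (R₁ - δ)) ≤ (1 + η) * (r₂ * ‖z‖) :=
          mul_le_mul_of_nonneg_left (mul_le_mul_of_nonneg_left (by linarith) hr₂.le)
            (by linarith)
        have h2 : r₂ * (δ * (1 + η)) ≤ r₂ * (η * R₁) := mul_le_mul_of_nonneg_left hδb hr₂.le
        nlinarith [h0, h1, h2]
    have heq1 : ∀ z ∈ annulus r₁ R₁, ‖g z‖ = 1 := by
      intro z hz
      have hs1 : r₁ < ‖z‖ := hz.1
      have ha1 : r₂ < ‖f z‖ := (hbij.mapsTo hz).1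
      have hval : ‖g z‖ * ‖g' z‖ = 1 := by
        rw [habsg z, habsg' z, div_mul_div_comm,
          mul_comm (r₂ * R₁) (‖f z‖ * ‖z‖)]
        exact div_self (mul_pos (mul_pos (lt_trans hr₂ ha1) (lt_trans hr₁ hs1))
          (mul_pos hr₂ hR₁pos)).ne'
      have h0x : 0 ≤ ‖g z‖ := norm_nonneg _
      have hy := hlb z hz
      have hmul := mul_le_mul_of_nonneg_left hy h0x
      rw [hval, mul_one] at hmul
      exact le_antisymm (hub z hz) hmul
    have hmax : IsMaxOn (norm ∘ g) (annulus r₁ R₁) w0 := by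
      intro z hz
      show ‖g z‖ ≤ ‖g w0‖
      rw [heq1 z hz, heq1 w0 hw0]
    have hconst := Complex.eqOn_of_isPreconnected_of_isMaxOn_norm
      (isPreconnected_annulus hr₁.le) (isOpen_annulus r₁ R₁) hgd hw0 hmax
    obtain ⟨l₀, hl₀⟩ : ∃ c : ℂ, g w0 = c := ⟨g w0, rfl⟩
    have hlabs : ‖l₀‖ = 1 := by rw [← hl₀]; exact heq1 w0 hw0
    have hconst' : ∀ z ∈ annulus r₁ R₁, (f z * z) / (↑r₂ * ↑R₁) = l₀ := by
      intro z hz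
      have h : g z = Function.const ℂ (g w0) z := hconst hz
      rw [Function.const_apply, hl₀] at h
      exact h
    refine ⟨l₀ * (↑r₂ * ↑R₁), Or.inr ⟨?_, ?_⟩⟩
    · intro z hz
      have h := hconst' z hz
      rw [div_eq_iff (mul_ne_zero hr₂c hR₁c)] at h
      rw [eq_div_iff (hzne z hz)]
      linear_combination h
    · rw [norm_mul, norm_mul, Complex.norm_real, Real.norm_eq_abs, Complex.norm_real, Real.norm_eq_abs,
        _root_.abs_of_pos hr₂, _root_.abs_of_pos hR₁pos, hlabs, one_mul]
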